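/- For all n ≥ 0 and complex x, the (q,r)-Dowling polynomials satisfy D_{m,r,q}(n,x) = ∑_{k=0}^{n} C(n,k) r^{n-k} ∑_{j=0}^{k} m^{k-j} S_q(k,j) x^j, where S_q(k,j) are the q-Stirling numbers of the second kind, assuming m ≠ 0. -/
import Mathlib


open Finset

noncomputable def qint (q : ℂ) (n : ℕ) : ℂ := (q ^ n - 1) / (q - 1)

/-- (q,r)-Whitney numbers of the first kind, via the triangular recurrence
`w(n+1,k) = q^{-n} (w(n,k-1) - (m[n]_q + r) w(n,k))`, with `w(0,0)=1` and
`w(n,k)=0` for `k>n` (the `k<0` values are zero, absorbed in the `k=0` case). -/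
noncomputable def qw (q m r : ℂ) : ℕ → ℕ → ℂ
  | 0, 0 => 1
  | 0, _ + 1 => 0
  | n + 1, 0 => q ^ (-(n : ℤ)) * (0 - (m * qint q n + r) * qw q m r n 0)
  | n + 1, k + 1 => q ^ (-(n : ℤ)) * (qw q m r n k - (m * qint q n + r) * qw q m r n (k + 1))

/-- (q,r)-Whitney numbers of the second kind, via
`W(n+1,k) = q^{k-1} W(n,k-1) + (m[k]_q + r) W(n,k)`, with `W(0,0)=1`. -/
noncomputable def qW (q m r : ℂ) : ℕ → ℕ → ℂ
  | 0, 0 => 1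
  | 0, _ + 1 => 0
  | n + 1, 0 => (m * qint q 0 + r) * qW q m r n 0
  | n + 1, k + 1 => q ^ k * qW q m r n k + (m * qint q (k + 1) + r) * qW q m r n (k + 1)

noncomputable def qDpoly (q m r : ℂ) (n : ℕ) (x : ℂ) : ℂ :=
  ∑ k ∈ Finset.range (n + 1), qW q m r n k * x ^ k

lemma qint_zero (q : ℂ) : qint q 0 = 0 := by simp [qint]

lemma qW_succ_zero (q m r : ℂ) (n : ℕ) : qW q m r (n+1) 0 = r * qW q m r n 0 := by
  rw [show qW q m r (n+1) 0 = (m * qint q 0 + r) * qW q m r n 0 from rfl, qint_zero]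
  ring

lemma qW_zero_right (q m r : ℂ) : ∀ n, qW q m r n 0 = r ^ n
  | 0 => by simp [qW]
  | n+1 => by rw [qW_succ_zero, qW_zero_right q m r n, pow_succ]; ring

lemma qW_eq_zero (q m r : ℂ) : ∀ n j, n < j → qW q m r n j = 0
  | 0, j+1, _ => rfl
  | n+1, j+1, h => by
      have h' : n < j := Nat.lt_of_succ_lt_succ h
      show q ^ j * qW q m r n j + (m * qint q (j + 1) + r) * qW q m r n (j + 1) = 0
      rw [qW_eq_zero q m r n j h', qW_eq_zero q m r n (j+1) (h'.trans (Nat.lt_succ_self j))]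
      ring

lemma qW_expand (q m r : ℂ) : ∀ (n : ℕ) (j : ℕ),
    qW q m r n j = ∑ k ∈ range (n+1), (n.choose k : ℂ) * r^(n-k) * m^(k-j) * qW q 1 0 k j := by
  intro n
  induction n with
  | zero =>
    intro j
    simp only [Finset.sum_range_one, Nat.choose_self, Nat.cast_one, pow_zero, Nat.zero_sub,
      one_mul, Nat.sub_zero]
    cases j <;> simp [qW]
  | succ n IH =>
    intro j
    have key : ∑ k ∈ range (n+2), ((n+1).choose k : ℂ) * r^(n+1-k) * m^(k-j) * qW q 1 0 k j
        = (∑ k ∈ range (n+1), (n.choose k : ℂ) * r^(n-k) * m^(k+1-j) * qW q 1 0 (k+1) j)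
          + r * ∑ k ∈ range (n+1), (n.choose k : ℂ) * r^(n-k) * m^(k-j) * qW q 1 0 k j := by
      rw [Finset.sum_range_succ']
      have h1 : ∀ k ∈ range (n+1),
          ((n+1).choose (k+1) : ℂ) * r^(n+1-(k+1)) * m^(k+1-j) * qW q 1 0 (k+1) j
          = (n.choose k : ℂ) * r^(n-k) * m^(k+1-j) * qW q 1 0 (k+1) j
            + (n.choose (k+1) : ℂ) * r^(n-k) * m^(k+1-j) * qW q 1 0 (k+1) j := by
        intro k _
        rw [Nat.choose_succ_succ, Nat.succ_sub_succ]
        push_cast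
        ring
      rw [Finset.sum_congr rfl h1, Finset.sum_add_distrib]
      have h2 : (∑ k ∈ range (n+1), (n.choose (k+1) : ℂ) * r^(n-k) * m^(k+1-j) * qW q 1 0 (k+1) j)
          + ((n+1).choose 0 : ℂ) * r^(n+1-0) * m^(0-j) * qW q 1 0 0 j
          = r * ∑ k ∈ range (n+1), (n.choose k : ℂ) * r^(n-k) * m^(k-j) * qW q 1 0 k j := by
        conv_rhs => rw [Finset.mul_sum, Finset.sum_range_succ']
        rw [Finset.sum_range_succ]
        simp only [Nat.choose_succ_self, Nat.cast_zero, zero_mul, add_zero, Nat.choose_zero_right,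
          Nat.cast_one, one_mul, Nat.sub_zero, Nat.zero_sub]
        congr 1
        · apply Finset.sum_congr rfl
          intro k hk
          rw [Finset.mem_range] at hk
          rw [show n - k = (n - (k+1)) + 1 from by omega, pow_succ]
          ring
        · ring
      rw [add_assoc, h2]
    rw [key]
    cases j with
    | zero =>
      have hB : (∑ k ∈ range (n+1), (n.choose k : ℂ) * r^(n-k) * m^(k+1-0) * qW q 1 0 (k+1) 0) = 0 := by
        apply Finset.sum_eq_zero
        intro k _
        rw [qW_zero_right]
        simp
      rw [hB, zero_add, ← IH 0, qW_succ_zero]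
    | succ j' =>
      have hB : ∀ k ∈ range (n+1),
          (n.choose k : ℂ) * r^(n-k) * m^(k+1-(j'+1)) * qW q 1 0 (k+1) (j'+1)
          = q^j' * ((n.choose k : ℂ) * r^(n-k) * m^(k-j') * qW q 1 0 k j')
            + m * qint q (j'+1) * ((n.choose k : ℂ) * r^(n-k) * m^(k-(j'+1)) * qW q 1 0 k (j'+1)) := by
        intro k _
        rw [Nat.succ_sub_succ,
          show qW q 1 0 (k+1) (j'+1)
            = q^j' * qW q 1 0 k j' + (1 * qint q (j'+1) + 0) * qW q 1 0 k (j'+1) from rfl]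
        by_cases h : j' + 1 ≤ k
        · rw [show k - j' = (k-(j'+1))+1 from by omega, pow_succ]
          ring
        · rw [qW_eq_zero q 1 0 k (j'+1) (by omega)]
          ring
      rw [Finset.sum_congr rfl hB, Finset.sum_add_distrib, ← Finset.mul_sum, ← Finset.mul_sum,
        ← IH j', ← IH (j'+1),
        show qW q m r (n+1) (j'+1)
          = q^j' * qW q m r n j' + (m * qint q (j'+1) + r) * qW q m r n (j'+1) from rfl]
      ring

theorem stmt19 (q m r x : ℂ) (hq0 : q ≠ 0) (hq1 : q ≠ 1) (hm : m ≠ 0) (n : ℕ) :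
    qDpoly q m r n x =
      ∑ k ∈ Finset.range (n + 1), (n.choose k : ℂ) * r ^ (n - k) *
        ∑ j ∈ Finset.range (k + 1), m ^ (k - j) * qW q 1 0 k j * x ^ j := by
  unfold qDpoly
  calc ∑ k ∈ range (n+1), qW q m r n k * x^k
      = ∑ k ∈ range (n+1), ∑ i ∈ range (n+1),
          (n.choose i : ℂ) * r^(n-i) * m^(i-k) * qW q 1 0 i k * x^k := by
        refine Finset.sum_congr rfl fun k _ => ?_
        rw [qW_expand, Finset.sum_mul]
    _ = ∑ i ∈ range (n+1), ∑ k ∈ range (n+1),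
          (n.choose i : ℂ) * r^(n-i) * m^(i-k) * qW q 1 0 i k * x^k := Finset.sum_comm
    _ = ∑ i ∈ range (n+1), ∑ k ∈ range (i+1),
          (n.choose i : ℂ) * r^(n-i) * m^(i-k) * qW q 1 0 i k * x^k := by
        refine Finset.sum_congr rfl fun i hi => ?_
        rw [Finset.mem_range] at hi
        symm
        apply Finset.sum_subset (Finset.range_subset_range.mpr (by omega))
        intro j _ hj
        rw [Finset.mem_range, not_lt] at hj
        rw [qW_eq_zero q 1 0 i j (by omega)]
        ring
    _ = ∑ k ∈ Finset.range (n + 1), (n.choose k : ℂ) * r ^ (n - k) *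
          ∑ j ∈ Finset.range (k + 1), m ^ (k - j) * qW q 1 0 k j * x ^ j := by
        refine Finset.sum_congr rfl fun i _ => ?_
        rw [Finset.mul_sum]
        exact Finset.sum_congr rfl fun j _ => by ring
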